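/- Let the CII estimate be Î_K = Σ_{ℓ=0}^{n−k} C(n−k,ℓ)·λ_{k,ℓ}·Σ_{W⊆K} (−1)^{k−|W|}·Î_{K,ℓ}^W, where for every W ⊆ K and ℓ ∈ L^{|W|} the stratum estimate Î_{K,ℓ}^W follows the stratum sampling model with count M_{W,ℓ} ≥ 1, the sample sequences of distinct estimated strata being mutually independent and independent of the vector of all counts (M_{W,ℓ}), and Î_{K,ℓ}^W = I_{K,ℓ}^W for ℓ ∉ L^{|W|}. Then the conditional variance of Î_K given the count vector satisfies Var[Î_K | (M_{W,ℓ})] = Σ_{W⊆K} Σ_{ℓ∈L^{|W|}} C(n−k,ℓ)²·λ_{k,ℓ}²·σ²_{K,ℓ,W}/M_{W,ℓ}. -/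

import Mathlib

open MeasureTheory ProbabilityTheory Finset
open scoped ENNReal

/-- Finsets carry the discrete σ-algebra. -/
instance finsetMeasurableSpace (n : ℕ) : MeasurableSpace (Finset (Fin n)) := ⊤

/-- The stratum `{S ⊆ N∖K : |S| = ℓ}`. -/
def strata (n : ℕ) (K : Finset (Fin n)) (ℓ : ℕ) : Finset (Finset (Fin n)) :=
  Kᶜ.powerset.filter (fun S => S.card = ℓ)

/-- The stratum value `I_{K,ℓ}^W = (1/C(n−k,ℓ))·Σ_{S ⊆ N∖K, |S|=ℓ} ν(S ∪ W)`. -/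
noncomputable def stratVal (n : ℕ) (ν : Finset (Fin n) → ℝ)
    (K W : Finset (Fin n)) (ℓ : ℕ) : ℝ :=
  (((n - K.card).choose ℓ : ℝ))⁻¹ * ∑ S ∈ strata n K ℓ, ν (S ∪ W)

/-- The stratum variance `σ²_{K,ℓ,W}`: the variance of `ν(S ∪ W)` for `S` uniformly
distributed on `{S ⊆ N∖K : |S| = ℓ}`. -/
noncomputable def stratVar (n : ℕ) (ν : Finset (Fin n) → ℝ)
    (K W : Finset (Fin n)) (ℓ : ℕ) : ℝ :=
  (((n - K.card).choose ℓ : ℝ))⁻¹ *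
    ∑ S ∈ strata n K ℓ, (ν (S ∪ W) - stratVal n ν K W ℓ) ^ 2

/-- The cardinal interaction index `I_K`. -/
noncomputable def CII (n : ℕ) (ν : Finset (Fin n) → ℝ) (lam : ℕ → ℝ)
    (K : Finset (Fin n)) : ℝ :=
  ∑ S ∈ Kᶜ.powerset, lam S.card *
    ∑ W ∈ K.powerset, (-1 : ℝ) ^ (K.card - W.card) * ν (S ∪ W)

/-- The constants `γ_2 = 2(n−1)²` and `γ_k = n^{k−1}·(n−k+1)²` for `k ≥ 3`. -/
noncomputable def gam (n k : ℕ) : ℝ :=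
  if k = 2 then 2 * ((n : ℝ) - 1) ^ 2
  else (n : ℝ) ^ (k - 1) * ((n : ℝ) - k + 1) ^ 2

/-- The stratum estimate: sample mean for estimated strata, exact value otherwise. -/
noncomputable def IhatStrat {Ω : Type*} (n : ℕ) (ν : Finset (Fin n) → ℝ)
    (K : Finset (Fin n)) (L : ℕ → Finset ℕ)
    (S : Finset (Fin n) → ℕ → ℕ → Ω → Finset (Fin n))
    (M : Finset (Fin n) → ℕ → Ω → ℕ) (W : Finset (Fin n)) (ℓ : ℕ) (ω : Ω) : ℝ :=
  if ℓ ∈ L W.card then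
    ((M W ℓ ω : ℝ))⁻¹ * ∑ m ∈ Finset.range (M W ℓ ω), ν (S W ℓ m ω ∪ W)
  else stratVal n ν K W ℓ

/-- The CII estimate `Î_K`. -/
noncomputable def IhatCII {Ω : Type*} (n : ℕ) (ν : Finset (Fin n) → ℝ)
    (K : Finset (Fin n)) (lam : ℕ → ℝ) (L : ℕ → Finset ℕ)
    (S : Finset (Fin n) → ℕ → ℕ → Ω → Finset (Fin n))
    (M : Finset (Fin n) → ℕ → Ω → ℕ) (ω : Ω) : ℝ :=
  ∑ ℓ ∈ Finset.range (n - K.card + 1), ((n - K.card).choose ℓ : ℝ) * lam ℓ *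
    ∑ W ∈ K.powerset, (-1 : ℝ) ^ (K.card - W.card) * IhatStrat n ν K L S M W ℓ ω

/-- The index set of estimated strata: pairs `(W, ℓ)` with `W ⊆ K` and `ℓ ∈ L^{|W|}`. -/
def EstIdx (n : ℕ) (K : Finset (Fin n)) (L : ℕ → Finset ℕ) : Type :=
  {p : Finset (Fin n) × ℕ // p.1 ⊆ K ∧ p.2 ∈ L p.1.card}

/-- The σ-algebra generated by the vector of all counts `(M_{W,ℓ})`. -/
def countSigma {Ω : Type*} (n : ℕ) (K : Finset (Fin n)) (L : ℕ → Finset ℕ)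
    (M : Finset (Fin n) → ℕ → Ω → ℕ) : MeasurableSpace Ω :=
  MeasurableSpace.comap (fun ω => fun q : EstIdx n K L => M q.1.1 q.1.2 ω) inferInstance


/-! ### Auxiliary material for the proof -/

instance (n : ℕ) : MeasurableSingletonClass (Finset (Fin n)) := ⟨fun _ => trivial⟩

noncomputable def estIdxFinset (n : ℕ) (K : Finset (Fin n)) (L : ℕ → Finset ℕ) :
    Finset (Finset (Fin n) × ℕ) :=
  K.powerset.biUnion fun W => (L W.card).image fun ℓ => (W, ℓ)

lemma mem_estIdxFinset {n : ℕ} {K : Finset (Fin n)} {L : ℕ → Finset ℕ}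
    (p : Finset (Fin n) × ℕ) :
    p ∈ estIdxFinset n K L ↔ p.1 ⊆ K ∧ p.2 ∈ L p.1.card := by
  simp only [estIdxFinset, mem_biUnion, mem_image, mem_powerset]
  constructor
  · rintro ⟨W, hW, ℓ, hℓ, rfl⟩; exact ⟨hW, hℓ⟩
  · rintro ⟨h1, h2⟩; exact ⟨p.1, h1, p.2, h2, rfl⟩

noncomputable instance instFintypeEstIdx (n : ℕ) (K : Finset (Fin n)) (L : ℕ → Finset ℕ) :
    Fintype (EstIdx n K L) :=
  Fintype.subtype (estIdxFinset n K L) mem_estIdxFinset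

lemma sum_estIdx {n : ℕ} {K : Finset (Fin n)} {L : ℕ → Finset ℕ}
    (f : Finset (Fin n) × ℕ → ℝ) :
    ∑ q : EstIdx n K L, f q.1 = ∑ W ∈ K.powerset, ∑ ℓ ∈ L W.card, f (W, ℓ) := by
  have h1 : ∑ q : EstIdx n K L, f q.1 = ∑ p ∈ estIdxFinset n K L, f p := by
    refine Finset.sum_bij (fun (q : EstIdx n K L) _ => q.1) ?_ ?_ ?_ ?_
    · exact fun q _ => (mem_estIdxFinset q.1).2 q.2
    · exact fun q1 _ q2 _ h => Subtype.ext h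
    · exact fun p hp => ⟨⟨p, (mem_estIdxFinset p).1 hp⟩, mem_univ _, rfl⟩
    · exact fun q _ => rfl
  rw [h1, estIdxFinset, Finset.sum_biUnion]
  · refine Finset.sum_congr rfl fun W _ => ?_
    rw [Finset.sum_image]
    exact fun x _ y _ h => by simpa using congrArg Prod.snd h
  · intro W1 h1 W2 h2 hne
    simp only [Finset.disjoint_left, mem_image]
    rintro p ⟨ℓ, _, rfl⟩ ⟨ℓ', _, h⟩
    exact hne (by simpa using congrArg Prod.fst h.symm)

lemma integrable_of_abs_bound {Ω : Type*} [MeasureSpace Ω]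
    [IsProbabilityMeasure (ℙ : Measure Ω)] {X : Ω → ℝ}
    (hX : AEStronglyMeasurable X ℙ) (C : ℝ) (h : ∀ ω, |X ω| ≤ C) :
    Integrable X ℙ :=
  memLp_one_iff_integrable.mp
    (MemLp.of_bound hX C (ae_of_all _ fun ω => by simpa using h ω))

lemma memℒp_two_of_abs_bound {Ω : Type*} [MeasureSpace Ω]
    [IsProbabilityMeasure (ℙ : Measure Ω)] {X : Ω → ℝ}
    (hX : AEStronglyMeasurable X ℙ) (C : ℝ) (h : ∀ ω, |X ω| ≤ C) :
    MemLp X 2 ℙ :=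
  MemLp.of_bound hX C (ae_of_all _ fun ω => by simpa using h ω)

/-- Conditional expectation of a bounded function of an independent pair, given the
σ-algebra generated by the first (countably-valued) component. -/
lemma condexp_indep_pair {Ω β γ : Type*} [MeasureSpace Ω]
    [IsProbabilityMeasure (ℙ : Measure Ω)]
    [mβ : MeasurableSpace β] [Countable β] [MeasurableSingletonClass β]
    [mγ : MeasurableSpace γ]
    (Y : Ω → β) (Z : Ω → γ) (hY : Measurable Y) (hZ : Measurable Z)
    (hind : IndepFun Y Z ℙ) (f : β → γ → ℝ) (hfm : ∀ y, Measurable (f y))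
    (C : ℝ) (hC : ∀ y z, |f y z| ≤ C) :
    (fun ω => ∫ ω', f (Y ω) (Z ω')) =ᵐ[ℙ]
      ℙ[fun ω => f (Y ω) (Z ω) | MeasurableSpace.comap Y mβ] := by
  have hm : MeasurableSpace.comap Y mβ ≤ (inferInstance : MeasurableSpace Ω) :=
    hY.comap_le
  have hFm : Measurable fun ω => f (Y ω) (Z ω) := by
    have h1 : Measurable fun p : γ × β => f p.2 p.1 :=
      measurable_from_prod_countable_left fun y => (hfm y)
    exact h1.comp (hZ.prodMk hY)
  have hFi : Integrable (fun ω => f (Y ω) (Z ω)) ℙ :=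
    integrable_of_abs_bound hFm.aestronglyMeasurable C fun ω => hC _ _
  set φ : β → ℝ := fun y => ∫ ω', f y (Z ω') with hφdef
  have hfzi : ∀ y, Integrable (fun ω => f y (Z ω)) ℙ := fun y =>
    integrable_of_abs_bound ((hfm y).comp hZ).aestronglyMeasurable C fun ω => hC _ _
  have hφb : ∀ y, |φ y| ≤ C := by
    intro y
    calc |φ y| ≤ ∫ ω', |f y (Z ω')| ∂ℙ := by
          simpa [Real.norm_eq_abs] using
            norm_integral_le_integral_norm (fun ω' => f y (Z ω'))
    _ ≤ ∫ _ω' , C ∂ℙ := integral_mono (hfzi y).abs (integrable_const C)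
          fun ω => hC _ _
    _ = C := by simp
  have hgm : Measurable[MeasurableSpace.comap Y mβ] fun ω => φ (Y ω) := by
    intro s hs
    exact ⟨φ ⁻¹' s, measurable_of_countable φ hs, rfl⟩
  have hgi : Integrable (fun ω => φ (Y ω)) ℙ :=
    integrable_of_abs_bound ((measurable_of_countable φ).comp hY).aestronglyMeasurable
      C fun ω => hφb _
  refine ae_eq_condExp_of_forall_setIntegral_eq hm hFi
    (fun s _ _ => hgi.integrableOn) (fun s hs _ => ?_)
    (StronglyMeasurable.aestronglyMeasurable hgm.stronglyMeasurable)
  obtain ⟨B, hB, rfl⟩ := hs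
  have hUnion : Y ⁻¹' B = ⋃ y : B, Y ⁻¹' {(y : β)} := by
    ext ω; simp
  have hmeas : ∀ y : B, MeasurableSet (Y ⁻¹' {(y : β)}) :=
    fun y => hY (measurableSet_singleton _)
  have hdisj : Pairwise (Function.onFun Disjoint fun y : B => Y ⁻¹' {(y : β)}) := by
    intro y y' hne
    refine Disjoint.preimage Y ?_
    rw [Set.disjoint_singleton]
    exact fun h => hne (Subtype.ext h)
  calc ∫ ω in Y ⁻¹' B, φ (Y ω) ∂ℙ
      = ∑' y : B, ∫ ω in Y ⁻¹' {(y : β)}, φ (Y ω) ∂ℙ := by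
        rw [hUnion, integral_iUnion hmeas hdisj (hgi.integrableOn)]
    _ = ∑' y : B, ∫ ω in Y ⁻¹' {(y : β)}, f (Y ω) (Z ω) ∂ℙ := by
        refine tsum_congr fun y => ?_
        have h1 : ∫ ω in Y ⁻¹' {(y : β)}, φ (Y ω) ∂ℙ
            = (ℙ (Y ⁻¹' {(y : β)})).toReal * φ y := by
          rw [setIntegral_congr_fun (hmeas y) (g := fun _ => φ (y : β))
            (fun ω hω => by rw [show Y ω = (y : β) from hω]),
            setIntegral_const, smul_eq_mul, measureReal_def]
        have h2 : ∫ ω in Y ⁻¹' {(y : β)}, f (Y ω) (Z ω) ∂ℙ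
            = (ℙ (Y ⁻¹' {(y : β)})).toReal * φ y := by
          rw [setIntegral_congr_fun (hmeas y) (g := fun ω => f (y : β) (Z ω))
            (fun ω hω => by rw [show Y ω = (y : β) from hω])]
          set u : β → ℝ := Set.indicator {(y : β)} (fun _ => (1:ℝ)) with hu
          have hiu : ∀ ω, Set.indicator (Y ⁻¹' {(y : β)}) (fun ω' => f (y : β) (Z ω')) ω
              = u (Y ω) * f (y : β) (Z ω) := by
            intro ω
            by_cases h : Y ω = (y : β) <;>
              simp [hu, Set.indicator_apply, h]
          rw [← integral_indicator (hmeas y)]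
          simp_rw [hiu]
          have hindc : IndepFun (fun ω => u (Y ω)) (fun ω => f (y : β) (Z ω)) ℙ :=
            hind.comp (measurable_of_countable u) (hfm _)
          rw [show (fun ω => u (Y ω) * f (y : β) (Z ω))
              = ((fun ω => u (Y ω)) * fun ω => f (y : β) (Z ω)) from rfl,
            IndepFun.integral_mul_eq_mul_integral hindc
            (integrable_of_abs_bound ((measurable_of_countable u).comp hY).aestronglyMeasurable 1
              (fun ω => by by_cases h : Y ω = (y : β) <;> simp [hu, Set.indicator_apply, h])).aestronglyMeasurable
            (hfzi _).aestronglyMeasurable]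
          congr 1
          have : (fun ω => u (Y ω)) = Set.indicator (Y ⁻¹' {(y : β)}) (fun _ => (1:ℝ)) := by
            funext ω
            by_cases h : Y ω = (y : β) <;> simp [hu, Set.indicator_apply, h]
          rw [this, integral_indicator_const _ (hmeas y), smul_eq_mul, mul_one, measureReal_def]
        rw [h1, h2]
    _ = ∫ ω in Y ⁻¹' B, f (Y ω) (Z ω) ∂ℙ := by
        rw [hUnion, integral_iUnion hmeas hdisj (hFi.integrableOn)]

lemma card_strata {n : ℕ} (K : Finset (Fin n)) (ℓ : ℕ) :
    (strata n K ℓ).card = (n - K.card).choose ℓ := by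
  have h : strata n K ℓ = Kᶜ.powersetCard ℓ := by
    ext T
    simp [strata, Finset.mem_powersetCard, Finset.mem_powerset, and_comm]
  rw [h, Finset.card_powersetCard, Finset.card_compl]
  simp

/-- Expectation of a function of one uniform stratum sample. -/
lemma integral_sample {Ω : Type*} [MeasureSpace Ω]
    [IsProbabilityMeasure (ℙ : Measure Ω)] {n : ℕ} {K : Finset (Fin n)} {ℓ : ℕ}
    (X : Ω → Finset (Fin n)) (hX : Measurable X)
    (hunif : ∀ T : Finset (Fin n), ℙ {ω | X ω = T}
      = if T ∈ strata n K ℓ then ((strata n K ℓ).card : ℝ≥0∞)⁻¹ else 0)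
    (h : Finset (Fin n) → ℝ) :
    ∫ ω, h (X ω) ∂ℙ
      = (((n - K.card).choose ℓ : ℝ))⁻¹ * ∑ T ∈ strata n K ℓ, h T := by
  haveI := Measure.isProbabilityMeasure_map (μ := (ℙ : Measure Ω)) hX.aemeasurable
  rw [← integral_map hX.aemeasurable (measurable_of_countable h).aestronglyMeasurable,
    integral_fintype (Integrable.of_finite)]
  have hpt : ∀ T : Finset (Fin n),
      ((ℙ : Measure Ω).map X) {T}
        = if T ∈ strata n K ℓ then ((strata n K ℓ).card : ℝ≥0∞)⁻¹ else 0 := by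
    intro T
    rw [Measure.map_apply hX (measurableSet_singleton T), ← hunif T]
    congr 1
  simp_rw [measureReal_def, hpt]
  have hite : ∀ T : Finset (Fin n),
      ((if T ∈ strata n K ℓ then ((strata n K ℓ).card : ℝ≥0∞)⁻¹ else 0)).toReal • h T
        = if T ∈ strata n K ℓ then (((n - K.card).choose ℓ : ℝ))⁻¹ * h T else 0 := by
    intro T
    by_cases hT : T ∈ strata n K ℓ <;>
      simp [hT, card_strata, smul_eq_mul]
  simp_rw [hite]
  rw [Finset.sum_ite_mem, Finset.univ_inter, Finset.mul_sum]

theorem MeasureTheory.MemLp.variance_eq {Ω : Type*} [MeasureSpace Ω]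
    [IsProbabilityMeasure (ℙ : Measure Ω)] {X : Ω → ℝ} (hX : MemLp X 2 ℙ) :
    variance X ℙ = ∫ ω, (((X - fun _ => ∫ x, X x ∂ℙ) ^ 2 : Ω → ℝ)) ω ∂ℙ := by
  rw [variance_eq_integral hX.aestronglyMeasurable.aemeasurable]
  rfl

/-- Variance of a function of one uniform stratum sample. -/
lemma var_sample {Ω : Type*} [MeasureSpace Ω]
    [IsProbabilityMeasure (ℙ : Measure Ω)] {n : ℕ} {K W : Finset (Fin n)} {ℓ : ℕ}
    (ν : Finset (Fin n) → ℝ)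
    (X : Ω → Finset (Fin n)) (hX : Measurable X)
    (hunif : ∀ T : Finset (Fin n), ℙ {ω | X ω = T}
      = if T ∈ strata n K ℓ then ((strata n K ℓ).card : ℝ≥0∞)⁻¹ else 0) :
    variance (fun ω => ν (X ω ∪ W)) ℙ = stratVar n ν K W ℓ := by
  obtain ⟨C, hC⟩ := Finite.exists_le fun T : Finset (Fin n) => |ν (T ∪ W)|
  have hmem : MemLp (fun ω => ν (X ω ∪ W)) 2 ℙ :=
    memℒp_two_of_abs_bound
      ((measurable_of_countable (fun T => ν (T ∪ W))).comp hX).aestronglyMeasurable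
      C (fun ω => hC _)
  have hE : ∫ ω, ν (X ω ∪ W) ∂ℙ = stratVal n ν K W ℓ :=
    integral_sample X hX hunif (fun T => ν (T ∪ W))
  have hfn : ((fun ω => ν (X ω ∪ W)) - fun _ => ∫ ω, ν (X ω ∪ W) ∂ℙ) ^ 2
      = fun ω => (ν (X ω ∪ W) - stratVal n ν K W ℓ) ^ 2 := by
    funext ω
    simp [hE]
  rw [MemLp.variance_eq hmem, hfn]
  exact integral_sample X hX hunif fun T => (ν (T ∪ W) - stratVal n ν K W ℓ) ^ 2

lemma variance_const_add' {Ω : Type*} [MeasureSpace Ω]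
    [IsProbabilityMeasure (ℙ : Measure Ω)] (c : ℝ) {T : Ω → ℝ}
    (hT : MemLp T 2 ℙ) :
    variance (fun ω => c + T ω) ℙ = variance T ℙ := by
  have h1 : MemLp (fun ω => c + T ω) 2 ℙ := by
    exact (memLp_const c).add hT
  rw [MemLp.variance_eq h1, MemLp.variance_eq hT]
  have hint : ∫ ω, (c + T ω) ∂ℙ = c + ∫ ω, T ω ∂ℙ := by
    rw [integral_add (integrable_const c) (hT.integrable one_le_two)]; simp
  congr 1
  funext ω
  simp only [Pi.pow_apply, Pi.sub_apply]
  rw [hint]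
  ring

lemma avg_abs_le {n : ℕ} (ν : Finset (Fin n) → ℝ) (Bν : ℝ) (hBν : ∀ T, |ν T| ≤ Bν)
    (hB0 : 0 ≤ Bν) (y : ℕ) (g : ℕ → Finset (Fin n)) (W : Finset (Fin n)) :
    |((y : ℝ))⁻¹ * ∑ m ∈ Finset.range y, ν (g m ∪ W)| ≤ Bν := by
  rcases Nat.eq_zero_or_pos y with h | h
  · simp [h, hB0]
  · have h1 : |∑ m ∈ Finset.range y, ν (g m ∪ W)| ≤ (y : ℝ) * Bν := by
      calc |∑ m ∈ Finset.range y, ν (g m ∪ W)|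
          ≤ ∑ m ∈ Finset.range y, |ν (g m ∪ W)| := Finset.abs_sum_le_sum_abs _ _
        _ ≤ ∑ _m ∈ Finset.range y, Bν := Finset.sum_le_sum fun m _ => hBν _
        _ = (y : ℝ) * Bν := by simp [mul_comm]
    have hy : (0:ℝ) < (y:ℝ) := by exact_mod_cast h
    rw [abs_mul, abs_inv, Nat.abs_cast]
    calc ((y:ℝ))⁻¹ * |∑ m ∈ Finset.range y, ν (g m ∪ W)|
        ≤ ((y:ℝ))⁻¹ * ((y:ℝ) * Bν) := by
          exact mul_le_mul_of_nonneg_left h1 (by positivity)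
      _ = Bν := by field_simp

noncomputable def cstPart (n : ℕ) (ν : Finset (Fin n) → ℝ) (K : Finset (Fin n))
    (lam : ℕ → ℝ) (L : ℕ → Finset ℕ) : ℝ :=
  ∑ ℓ ∈ Finset.range (n - K.card + 1), ∑ W ∈ K.powerset,
    if ℓ ∈ L W.card then 0
    else ((n - K.card).choose ℓ : ℝ) * lam ℓ *
      ((-1 : ℝ) ^ (K.card - W.card) * stratVal n ν K W ℓ)

noncomputable def Ffun (n : ℕ) (ν : Finset (Fin n) → ℝ) (K : Finset (Fin n))
    (lam : ℕ → ℝ) (L : ℕ → Finset ℕ)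
    (y : EstIdx n K L → ℕ) (z : EstIdx n K L → ℕ → Finset (Fin n)) : ℝ :=
  cstPart n ν K lam L + ∑ q : EstIdx n K L,
    ((n - K.card).choose q.1.2 : ℝ) * lam q.1.2 *
      ((-1 : ℝ) ^ (K.card - q.1.1.card) *
        (((y q : ℝ))⁻¹ * ∑ m ∈ Finset.range (y q), ν (z q m ∪ q.1.1)))

lemma ihat_eq {Ω : Type*} (n : ℕ) (ν : Finset (Fin n) → ℝ) (K : Finset (Fin n))
    (lam : ℕ → ℝ) (L : ℕ → Finset ℕ)
    (hL : ∀ w, L w ⊆ Finset.range (n - K.card + 1))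
    (S : Finset (Fin n) → ℕ → ℕ → Ω → Finset (Fin n))
    (M : Finset (Fin n) → ℕ → Ω → ℕ) (ω : Ω) :
    IhatCII n ν K lam L S M ω =
      Ffun n ν K lam L (fun q => M q.1.1 q.1.2 ω) (fun q m => S q.1.1 q.1.2 m ω) := by
  classical
  simp only [IhatCII, IhatStrat, Ffun, cstPart]
  rw [sum_estIdx (fun p => ((n - K.card).choose p.2 : ℝ) * lam p.2 *
    ((-1 : ℝ) ^ (K.card - p.1.card) *
      (((M p.1 p.2 ω : ℝ))⁻¹ * ∑ m ∈ Finset.range (M p.1 p.2 ω), ν (S p.1 p.2 m ω ∪ p.1))))]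
  have hswap : (∑ W ∈ K.powerset, ∑ ℓ ∈ L W.card,
        ((n - K.card).choose ℓ : ℝ) * lam ℓ *
          ((-1 : ℝ) ^ (K.card - W.card) *
            (((M W ℓ ω : ℝ))⁻¹ * ∑ m ∈ Finset.range (M W ℓ ω), ν (S W ℓ m ω ∪ W))))
      = ∑ ℓ ∈ Finset.range (n - K.card + 1), ∑ W ∈ K.powerset,
          if ℓ ∈ L W.card then
            ((n - K.card).choose ℓ : ℝ) * lam ℓ *
              ((-1 : ℝ) ^ (K.card - W.card) *
                (((M W ℓ ω : ℝ))⁻¹ * ∑ m ∈ Finset.range (M W ℓ ω), ν (S W ℓ m ω ∪ W)))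
          else 0 := by
    rw [Finset.sum_comm]
    refine Finset.sum_congr rfl fun W _ => ?_
    rw [Finset.sum_ite_mem, Finset.inter_eq_right.mpr (hL W.card)]
  rw [hswap, ← Finset.sum_add_distrib]
  refine Finset.sum_congr rfl fun ℓ hℓ => ?_
  rw [Finset.mul_sum, ← Finset.sum_add_distrib]
  refine Finset.sum_congr rfl fun W hW => ?_
  by_cases h : ℓ ∈ L W.card <;> simp [h]


lemma variance_Ffun {Ω : Type*} [MeasureSpace Ω] [IsProbabilityMeasure (ℙ : Measure Ω)]
    (n : ℕ) (ν : Finset (Fin n) → ℝ) (K : Finset (Fin n)) (lam : ℕ → ℝ)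
    (L : ℕ → Finset ℕ)
    (S : Finset (Fin n) → ℕ → ℕ → Ω → Finset (Fin n))
    (hSmeas : ∀ W ℓ m, Measurable (S W ℓ m))
    (hiid : ∀ W, W ⊆ K → ∀ ℓ ∈ L W.card,
      iIndepFun (m := fun _ => finsetMeasurableSpace n) (S W ℓ) ℙ)
    (hunif : ∀ W, W ⊆ K → ∀ ℓ ∈ L W.card, ∀ (m : ℕ) (T : Finset (Fin n)),
      ℙ {ω | S W ℓ m ω = T}
        = if T ∈ strata n K ℓ then ((strata n K ℓ).card : ℝ≥0∞)⁻¹ else 0)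
    (hseqIndep : iIndepFun
      (m := fun _ : EstIdx n K L => (inferInstance : MeasurableSpace (ℕ → Finset (Fin n))))
      (fun p ω => fun m => S p.1.1 p.1.2 m ω) ℙ)
    (y : EstIdx n K L → ℕ) :
    variance (fun ω => Ffun n ν K lam L y (fun q m => S q.1.1 q.1.2 m ω)) ℙ
      = ∑ q : EstIdx n K L, ((n - K.card).choose q.1.2 : ℝ) ^ 2 * lam q.1.2 ^ 2 *
          stratVar n ν K q.1.1 q.1.2 / (y q : ℝ) := by
  classical
  obtain ⟨B0, hB0⟩ := Finite.exists_le fun T : Finset (Fin n) => |ν T|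
  set Bν : ℝ := max B0 0 with hBdef
  have hBν : ∀ T, |ν T| ≤ Bν := fun T => le_trans (hB0 T) (le_max_left _ _)
  have hB0' : (0:ℝ) ≤ Bν := le_max_right _ _
  set X : EstIdx n K L → Ω → ℝ := fun q ω =>
    ((n - K.card).choose q.1.2 : ℝ) * lam q.1.2 *
      ((-1 : ℝ) ^ (K.card - q.1.1.card) *
        (((y q : ℝ))⁻¹ * ∑ m ∈ Finset.range (y q), ν (S q.1.1 q.1.2 m ω ∪ q.1.1)))
    with hXdef
  have hXm : ∀ q, Measurable (X q) := by
    intro q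
    apply Measurable.const_mul
    apply Measurable.const_mul
    apply Measurable.const_mul
    exact Finset.measurable_sum _ fun m _ =>
      (measurable_of_countable (fun T => ν (T ∪ q.1.1))).comp (hSmeas _ _ m)
  have hXb : ∀ q ω, |X q ω| ≤
      |((n - K.card).choose q.1.2 : ℝ) * lam q.1.2| * Bν := by
    intro q ω
    rw [hXdef]
    simp only [abs_mul, abs_pow, abs_neg, abs_one, one_pow, one_mul]
    refine mul_le_mul_of_nonneg_left ?_ (by positivity)
    rw [← abs_mul]
    exact avg_abs_le ν Bν hBν hB0' (y q) (fun m => S q.1.1 q.1.2 m ω) q.1.1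
  have hXmem : ∀ q, MemLp (X q) 2 ℙ := fun q =>
    memℒp_two_of_abs_bound (hXm q).aestronglyMeasurable _ (hXb q)
  have h0 : (fun ω => Ffun n ν K lam L y (fun q m => S q.1.1 q.1.2 m ω))
      = fun ω => cstPart n ν K lam L + (∑ q : EstIdx n K L, X q) ω := by
    funext ω
    simp [Ffun, hXdef, Finset.sum_apply]
  rw [h0, variance_const_add' _ (memLp_finset_sum' _ fun q _ => hXmem q)]
  have hindX : iIndepFun (m := fun _ => (inferInstance : MeasurableSpace ℝ)) X ℙ := by
    have := hseqIndep.comp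
      (g := fun q (s : ℕ → Finset (Fin n)) =>
        ((n - K.card).choose q.1.2 : ℝ) * lam q.1.2 *
          ((-1 : ℝ) ^ (K.card - q.1.1.card) *
            (((y q : ℝ))⁻¹ * ∑ m ∈ Finset.range (y q), ν (s m ∪ q.1.1))))
      (fun q => by
        apply Measurable.const_mul
        apply Measurable.const_mul
        apply Measurable.const_mul
        exact Finset.measurable_sum _ fun m _ =>
          (measurable_of_countable (fun T => ν (T ∪ q.1.1))).comp (measurable_pi_apply m))
    exact this
  rw [IndepFun.variance_sum (fun q _ => hXmem q)
    (fun q _ q' _ hqq' => hindX.indepFun hqq')]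
  refine Finset.sum_congr rfl fun q _ => ?_
  -- variance of one estimated stratum mean
  have hX1 : X q = fun ω =>
      (((n - K.card).choose q.1.2 : ℝ) * lam q.1.2 * (-1 : ℝ) ^ (K.card - q.1.1.card) *
        ((y q : ℝ))⁻¹) *
        ∑ m ∈ Finset.range (y q), ν (S q.1.1 q.1.2 m ω ∪ q.1.1) := by
    funext ω
    rw [hXdef]
    ring
  rw [hX1, variance_const_mul]
  have hsum : (fun ω => ∑ m ∈ Finset.range (y q), ν (S q.1.1 q.1.2 m ω ∪ q.1.1))
      = ∑ m ∈ Finset.range (y q), fun ω => ν (S q.1.1 q.1.2 m ω ∪ q.1.1) := by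
    funext ω
    rw [Finset.sum_apply]
  have hmemS : ∀ m, MemLp (fun ω => ν (S q.1.1 q.1.2 m ω ∪ q.1.1)) 2 ℙ := fun m =>
    memℒp_two_of_abs_bound
      ((measurable_of_countable (fun T => ν (T ∪ q.1.1))).comp (hSmeas _ _ m)).aestronglyMeasurable
      Bν (fun ω => hBν _)
  have hindS : iIndepFun (m := fun _ => (inferInstance : MeasurableSpace ℝ))
      (fun m ω => ν (S q.1.1 q.1.2 m ω ∪ q.1.1)) ℙ := by
    have := (hiid q.1.1 q.2.1 q.1.2 q.2.2).comp
      (g := fun _ T => ν (T ∪ q.1.1))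
      (fun m => measurable_of_countable _)
    exact this
  rw [hsum, IndepFun.variance_sum (fun m _ => hmemS m)
    (fun m _ m' _ hmm' => hindS.indepFun hmm')]
  have hvs : ∀ m ∈ Finset.range (y q),
      variance (fun ω => ν (S q.1.1 q.1.2 m ω ∪ q.1.1)) ℙ
        = stratVar n ν K q.1.1 q.1.2 := fun m _ =>
    var_sample ν (S q.1.1 q.1.2 m) (hSmeas _ _ m) (hunif q.1.1 q.2.1 q.1.2 q.2.2 m)
  rw [Finset.sum_congr rfl hvs, Finset.sum_const, Finset.card_range, nsmul_eq_mul]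
  have hsq : ((-1 : ℝ) ^ (K.card - q.1.1.card)) ^ 2 = 1 := by
    rw [← pow_mul, mul_comm, pow_mul]
    norm_num
  rcases Nat.eq_zero_or_pos (y q) with h | h
  · simp [h]
  · have hy : ((y q : ℝ)) ≠ 0 := by
      exact_mod_cast h.ne'
    rw [mul_pow, mul_pow, mul_pow, hsq]
    field_simp

/-- **Conditional variance of the CII estimate given the count vector (Lemma A.4).**
`Var[Î_K | (M_{W,ℓ})] = Σ_{W⊆K} Σ_{ℓ∈L^{|W|}} C(n−k,ℓ)²·λ_{k,ℓ}²·σ²_{K,ℓ,W}/M_{W,ℓ}`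
almost surely. -/
theorem cii_estimate_conditional_variance {Ω : Type*} [MeasureSpace Ω]
    [IsProbabilityMeasure (ℙ : Measure Ω)]
    (n : ℕ) (ν : Finset (Fin n) → ℝ) (K : Finset (Fin n)) (lam : ℕ → ℝ)
    (L : ℕ → Finset ℕ) (hL : ∀ w, L w ⊆ Finset.range (n - K.card + 1))
    (S : Finset (Fin n) → ℕ → ℕ → Ω → Finset (Fin n))
    (M : Finset (Fin n) → ℕ → Ω → ℕ)
    (hSmeas : ∀ W ℓ m, Measurable (S W ℓ m)) (hMmeas : ∀ W ℓ, Measurable (M W ℓ))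
    -- within each estimated stratum the samples are i.i.d. uniform on the stratum
    (hiid : ∀ W, W ⊆ K → ∀ ℓ ∈ L W.card,
      iIndepFun (m := fun _ => finsetMeasurableSpace n) (S W ℓ) ℙ)
    (hunif : ∀ W, W ⊆ K → ∀ ℓ ∈ L W.card, ∀ (m : ℕ) (T : Finset (Fin n)),
      ℙ {ω | S W ℓ m ω = T}
        = if T ∈ strata n K ℓ then ((strata n K ℓ).card : ℝ≥0∞)⁻¹ else 0)
    -- each count is a.s. positive
    (hMpos : ∀ W, W ⊆ K → ∀ ℓ ∈ L W.card, ∀ᵐ ω ∂ℙ, 1 ≤ M W ℓ ω)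
    -- the sample sequences of distinct estimated strata are mutually independent
    (hseqIndep : iIndepFun
      (m := fun _ : EstIdx n K L => (inferInstance : MeasurableSpace (ℕ → Finset (Fin n))))
      (fun p ω => fun m => S p.1.1 p.1.2 m ω) ℙ)
    -- and independent of the vector of all counts
    (hcountIndep : IndepFun
      (fun ω => fun q : EstIdx n K L => M q.1.1 q.1.2 ω)
      (fun ω => fun (q : EstIdx n K L) (m : ℕ) => S q.1.1 q.1.2 m ω) ℙ) :
    ℙ[fun ω => (IhatCII n ν K lam L S M ω
        - (ℙ[IhatCII n ν K lam L S M | countSigma n K L M]) ω) ^ 2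
      | countSigma n K L M]
      =ᵐ[ℙ] fun ω => ∑ W ∈ K.powerset, ∑ ℓ ∈ L W.card,
          ((n - K.card).choose ℓ : ℝ) ^ 2 * lam ℓ ^ 2 * stratVar n ν K W ℓ
            / (M W ℓ ω : ℝ) := by
  classical
  unfold countSigma
  obtain ⟨B0, hB0⟩ := Finite.exists_le fun T : Finset (Fin n) => |ν T|
  have hBν : ∀ T, |ν T| ≤ max B0 0 := fun T => le_trans (hB0 T) (le_max_left _ _)
  have hB0' : (0:ℝ) ≤ max B0 0 := le_max_right _ _
  set Bν : ℝ := max B0 0 with hBdef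
  have hYm : Measurable (fun ω => fun q : EstIdx n K L => M q.1.1 q.1.2 ω) :=
    measurable_pi_lambda _ fun q => hMmeas _ _
  have hZm : Measurable (fun ω => fun (q : EstIdx n K L) (m : ℕ) => S q.1.1 q.1.2 m ω) :=
    measurable_pi_lambda _ fun q => measurable_pi_lambda _ fun m => hSmeas _ _ _
  have hfm : ∀ y, Measurable (Ffun n ν K lam L y) := by
    intro y
    unfold Ffun
    refine Measurable.const_add ?_ _
    refine Finset.measurable_sum _ fun q _ => ?_
    apply Measurable.const_mul
    apply Measurable.const_mul
    apply Measurable.const_mul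
    exact Finset.measurable_sum _ fun m _ =>
      (measurable_of_countable (fun T => ν (T ∪ q.1.1))).comp
        ((measurable_pi_apply m).comp (measurable_pi_apply q))
  have hterm : ∀ (q : EstIdx n K L) (y : EstIdx n K L → ℕ)
      (z : EstIdx n K L → ℕ → Finset (Fin n)),
      |((n - K.card).choose q.1.2 : ℝ) * lam q.1.2 *
        ((-1 : ℝ) ^ (K.card - q.1.1.card) *
          (((y q : ℝ))⁻¹ * ∑ m ∈ Finset.range (y q), ν (z q m ∪ q.1.1)))|
      ≤ |((n - K.card).choose q.1.2 : ℝ) * lam q.1.2| * Bν := by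
    intro q y z
    rw [abs_mul]
    refine mul_le_mul_of_nonneg_left ?_ (abs_nonneg _)
    rw [abs_mul, abs_pow, abs_neg, abs_one, one_pow, one_mul]
    exact avg_abs_le ν Bν hBν hB0' (y q) (fun m => z q m) q.1.1
  set CF : ℝ := |cstPart n ν K lam L| +
    ∑ q : EstIdx n K L, |((n - K.card).choose q.1.2 : ℝ) * lam q.1.2| * Bν with hCFdef
  have hCF0 : 0 ≤ CF := by
    rw [hCFdef]
    have : (0:ℝ) ≤ ∑ q : EstIdx n K L, |((n - K.card).choose q.1.2 : ℝ) * lam q.1.2| * Bν :=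
      Finset.sum_nonneg fun q _ => mul_nonneg (abs_nonneg _) hB0'
    positivity
  have hCFb : ∀ y z, |Ffun n ν K lam L y z| ≤ CF := by
    intro y z
    calc |Ffun n ν K lam L y z|
        ≤ |cstPart n ν K lam L| + |∑ q : EstIdx n K L,
            ((n - K.card).choose q.1.2 : ℝ) * lam q.1.2 *
              ((-1 : ℝ) ^ (K.card - q.1.1.card) *
                (((y q : ℝ))⁻¹ * ∑ m ∈ Finset.range (y q), ν (z q m ∪ q.1.1)))| :=
          abs_add_le _ _
      _ ≤ CF := by
          rw [hCFdef]
          refine add_le_add le_rfl ?_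
          exact (Finset.abs_sum_le_sum_abs _ _).trans
            (Finset.sum_le_sum fun q _ => hterm q y z)
  -- the conditional expectation of the estimate
  have hEcond := condexp_indep_pair (fun ω => fun q : EstIdx n K L => M q.1.1 q.1.2 ω)
    (fun ω => fun (q : EstIdx n K L) (m : ℕ) => S q.1.1 q.1.2 m ω) hYm hZm hcountIndep
    (Ffun n ν K lam L) hfm CF hCFb
  set φ : (EstIdx n K L → ℕ) → ℝ :=
    fun y => ∫ ω', Ffun n ν K lam L y (fun q m => S q.1.1 q.1.2 m ω') with hφdef
  have hIeq : (fun ω => Ffun n ν K lam L (fun q : EstIdx n K L => M q.1.1 q.1.2 ω)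
      (fun (q : EstIdx n K L) (m : ℕ) => S q.1.1 q.1.2 m ω)) = IhatCII n ν K lam L S M := by
    funext ω
    exact (ihat_eq n ν K lam L hL S M ω).symm
  have hcond1 : ℙ[IhatCII n ν K lam L S M |
      MeasurableSpace.comap (fun ω => fun q : EstIdx n K L => M q.1.1 q.1.2 ω) inferInstance]
      =ᵐ[ℙ] fun ω => φ (fun q : EstIdx n K L => M q.1.1 q.1.2 ω) := by
    rw [← hIeq]
    exact hEcond.symm
  -- the squared deviation as a function of the pair
  have hφb : ∀ y, |φ y| ≤ CF := by
    intro y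
    have hint : Integrable (fun ω' => Ffun n ν K lam L y
        (fun q m => S q.1.1 q.1.2 m ω')) ℙ :=
      integrable_of_abs_bound ((hfm y).comp hZm).aestronglyMeasurable CF fun ω => hCFb _ _
    calc |φ y| ≤ ∫ ω', |Ffun n ν K lam L y (fun q m => S q.1.1 q.1.2 m ω')| ∂ℙ := by
          rw [hφdef]
          simpa [Real.norm_eq_abs] using norm_integral_le_integral_norm
            (fun ω' => Ffun n ν K lam L y (fun q m => S q.1.1 q.1.2 m ω'))
      _ ≤ ∫ _ω', CF ∂ℙ := integral_mono hint.abs (integrable_const CF) fun ω => hCFb _ _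
      _ = CF := by simp
  have hf2m : ∀ y, Measurable (fun z => (Ffun n ν K lam L y z - φ y) ^ 2) :=
    fun y => ((hfm y).sub measurable_const).pow_const 2
  have hf2b : ∀ y z, |(Ffun n ν K lam L y z - φ y) ^ 2| ≤ (2 * CF) ^ 2 := by
    intro y z
    rw [abs_pow]
    refine pow_le_pow_left₀ (abs_nonneg _) ?_ 2
    calc |Ffun n ν K lam L y z - φ y| ≤ |Ffun n ν K lam L y z| + |φ y| := by
          rw [sub_eq_add_neg]
          exact (abs_add_le _ _).trans_eq (by rw [abs_neg])
      _ ≤ CF + CF := add_le_add (hCFb y z) (hφb y)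
      _ = 2 * CF := by ring
  have hcond2 := condexp_indep_pair (fun ω => fun q : EstIdx n K L => M q.1.1 q.1.2 ω)
    (fun ω => fun (q : EstIdx n K L) (m : ℕ) => S q.1.1 q.1.2 m ω) hYm hZm hcountIndep
    (fun y z => (Ffun n ν K lam L y z - φ y) ^ 2) hf2m ((2 * CF) ^ 2) hf2b
  -- the a.e. identification of the squared deviation
  have hae : (fun ω => (IhatCII n ν K lam L S M ω
      - (ℙ[IhatCII n ν K lam L S M |
          MeasurableSpace.comap (fun ω => fun q : EstIdx n K L => M q.1.1 q.1.2 ω)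
            inferInstance]) ω) ^ 2)
      =ᵐ[ℙ] fun ω => (Ffun n ν K lam L (fun q : EstIdx n K L => M q.1.1 q.1.2 ω)
          (fun (q : EstIdx n K L) (m : ℕ) => S q.1.1 q.1.2 m ω)
        - φ (fun q : EstIdx n K L => M q.1.1 q.1.2 ω)) ^ 2 := by
    filter_upwards [hcond1] with ω hω
    rw [hω, ihat_eq n ν K lam L hL S M ω]
  -- pointwise computation of the conditional variance
  have hvar : ∀ y : EstIdx n K L → ℕ,
      (∫ ω', (Ffun n ν K lam L y (fun q m => S q.1.1 q.1.2 m ω') - φ y) ^ 2 ∂ℙ)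
        = ∑ q : EstIdx n K L, ((n - K.card).choose q.1.2 : ℝ) ^ 2 * lam q.1.2 ^ 2 *
            stratVar n ν K q.1.1 q.1.2 / (y q : ℝ) := by
    intro y
    have hmemF : MemLp (fun ω' => Ffun n ν K lam L y
        (fun q m => S q.1.1 q.1.2 m ω')) 2 ℙ :=
      memℒp_two_of_abs_bound ((hfm y).comp hZm).aestronglyMeasurable CF fun ω => hCFb _ _
    have hveq : (∫ ω', (Ffun n ν K lam L y (fun q m => S q.1.1 q.1.2 m ω') - φ y) ^ 2 ∂ℙ)
        = variance (fun ω' => Ffun n ν K lam L y (fun q m => S q.1.1 q.1.2 m ω')) ℙ :=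
      (MemLp.variance_eq hmemF).symm
    rw [hveq, variance_Ffun n ν K lam L S hSmeas hiid hunif hseqIndep y]
  refine (condExp_congr_ae hae).trans (hcond2.symm.trans (ae_of_all _ fun ω => ?_))
  have hsum := sum_estIdx (n := n) (K := K) (L := L)
    (fun p => ((n - K.card).choose p.2 : ℝ) ^ 2 * lam p.2 ^ 2 *
      stratVar n ν K p.1 p.2 / (M p.1 p.2 ω : ℝ))
  calc (∫ ω', (Ffun n ν K lam L (fun q : EstIdx n K L => M q.1.1 q.1.2 ω)
          (fun q m => S q.1.1 q.1.2 m ω')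
        - φ (fun q : EstIdx n K L => M q.1.1 q.1.2 ω)) ^ 2 ∂ℙ)
      = ∑ q : EstIdx n K L, ((n - K.card).choose q.1.2 : ℝ) ^ 2 * lam q.1.2 ^ 2 *
          stratVar n ν K q.1.1 q.1.2 / (M q.1.1 q.1.2 ω : ℝ) :=
        hvar (fun q : EstIdx n K L => M q.1.1 q.1.2 ω)
    _ = ∑ W ∈ K.powerset, ∑ ℓ ∈ L W.card,
          ((n - K.card).choose ℓ : ℝ) ^ 2 * lam ℓ ^ 2 * stratVar n ν K W ℓ
            / (M W ℓ ω : ℝ) := hsum
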